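/- Let R be a commutative ring, λ ∈ R, V the free R-module on {v₊, v₋}, W the free R-module on {w₊, w₋}, and let ε, δ, ν_λ, μ'_λ be the band surgery maps defined in the context. Then (ε ⊗ id_W) ∘ (id_W ⊗ ν_λ) = δ ∘ μ'_λ as R-linear maps W ⊗ W → V ⊗ W; explicitly, both maps send w₊⊗w₋ to λ·v₋⊗w₋ and vanish on the other three basis tensors. -/

import Mathlib

open TensorProduct

/-- With `V` free on `{v₊, v₋}`, `W` free on `{w₊, w₋}`, and band
surgery maps `ε, δ, ν_λ, μ'_λ` as in the context, one has
`(ε ⊗ id_W) ∘ (id_W ⊗ ν_λ) = δ ∘ μ'_λ : W ⊗ W → V ⊗ W`; explicitly both maps send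
`w₊ ⊗ w₋` to `λ·v₋ ⊗ w₋` and vanish on the other three basis tensors. -/
theorem twice_punctured_disk_commutativity
    {R V W : Type*} [CommRing R] [AddCommGroup V] [Module R V]
    [AddCommGroup W] [Module R W] (lam : R)
    (b : Module.Basis Bool R V) (vp vm : V) (hvp : vp = b true) (hvm : vm = b false)
    (c : Module.Basis Bool R W) (wp wm : W) (hwp : wp = c true) (hwm : wm = c false)
    (ε : W ⊗[R] W →ₗ[R] V)
    (hε₁ : ε (wp ⊗ₜ wm) = vm) (hε₂ : ε (wm ⊗ₜ wp) = vm)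
    (hε₃ : ε (wp ⊗ₜ wp) = 0) (hε₄ : ε (wm ⊗ₜ wm) = 0)
    (δ : W →ₗ[R] V ⊗[R] W)
    (hδ₁ : δ wp = vm ⊗ₜ wp) (hδ₂ : δ wm = vm ⊗ₜ wm)
    (ν : W →ₗ[R] W ⊗[R] W)
    (hν₁ : ν wm = lam • (wm ⊗ₜ wm)) (hν₂ : ν wp = 0)
    (μ' : W ⊗[R] W →ₗ[R] W)
    (hμ'₁ : μ' (wp ⊗ₜ wm) = lam • wm) (hμ'₂ : μ' (wp ⊗ₜ wp) = 0)
    (hμ'₃ : μ' (wm ⊗ₜ wp) = 0) (hμ'₄ : μ' (wm ⊗ₜ wm) = 0) :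
    (TensorProduct.map ε (LinearMap.id : W →ₗ[R] W)).comp
        (((TensorProduct.assoc R W W W).symm.toLinearMap).comp
          (TensorProduct.map (LinearMap.id : W →ₗ[R] W) ν)) =
      δ.comp μ' ∧
    (δ.comp μ') (wp ⊗ₜ wm) = lam • (vm ⊗ₜ wm) ∧
    (δ.comp μ') (wp ⊗ₜ wp) = 0 ∧
    (δ.comp μ') (wm ⊗ₜ wp) = 0 ∧
    (δ.comp μ') (wm ⊗ₜ wm) = 0 := by
  have key : ∀ x y : W, (x = wp ∨ x = wm) → (y = wp ∨ y = wm) →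
      ((TensorProduct.map ε (LinearMap.id : W →ₗ[R] W)).comp
        (((TensorProduct.assoc R W W W).symm.toLinearMap).comp
          (TensorProduct.map (LinearMap.id : W →ₗ[R] W) ν))) (x ⊗ₜ y)
        = (δ.comp μ') (x ⊗ₜ y) := by
    rintro x y (rfl|rfl) (rfl|rfl) <;>
      simp [hν₁, hν₂, hμ'₁, hμ'₂, hμ'₃, hμ'₄, hδ₁, hδ₂, hε₁, hε₂, hε₃, hε₄,
        TensorProduct.smul_tmul, TensorProduct.tmul_smul, map_smul]
  refine ⟨?_, by simp [hμ'₁, hδ₂, map_smul], by simp [hμ'₂], by simp [hμ'₃], by simp [hμ'₄]⟩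
  apply Module.Basis.ext (c.tensorProduct c)
  rintro ⟨i, j⟩
  simp only [Module.Basis.tensorProduct_apply]
  cases i <;> cases j <;>
    [exact key _ _ (Or.inr hwm.symm) (Or.inr hwm.symm);
     exact key _ _ (Or.inr hwm.symm) (Or.inl hwp.symm);
     exact key _ _ (Or.inl hwp.symm) (Or.inr hwm.symm);
     exact key _ _ (Or.inl hwp.symm) (Or.inl hwp.symm)]
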